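/- Let f be a map from a finite domain D_f into Finset a such that f v = V v for every v ∈ D_f. If D_f is nonempty (equivalently, α f ≥ 0 in WithBot ℕ), then α (next f) < α f. -/
import Mathlib


/-- A map with finite domain `dom`, whose values are given by `toFun`. -/
structure FMap (α : Type*) (β : Type*) where
  dom : Finset α
  toFun : α → β

/-- The map `next f`, with domain `⋃ v ∈ D_f, f v` and values `V`. -/
def FMap.next {α : Type*} [DecidableEq α] (V : α → Finset α)
    (f : FMap α (Finset α)) : FMap α (Finset α) :=
  ⟨f.dom.biUnion f.toFun, V⟩

/-- `α f`: the supremum of the potential `γ` over the domain of `f` (⊥ for the empty domain). -/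
def FMap.alpha {α β : Type*} (γ : α → ℕ) (f : FMap α β) : WithBot ℕ :=
  f.dom.sup (fun v => (γ v : WithBot ℕ))

/-- **Lemma 2.** Let `f` be a map from a finite domain `D_f` into `Finset α`
such that `f v = V v` for every `v ∈ D_f`.  If `D_f` is nonempty (equivalently,
`α f ≥ 0` in `WithBot ℕ`), then `α (next f) < α f`. -/
theorem alpha_next_lt_alpha {α : Type*} [DecidableEq α]
    (V : α → Finset α) (γ : α → ℕ)
    (hγ : ∀ x, ∀ y ∈ V x, γ y < γ x)
    (f : FMap α (Finset α))
    (hf : ∀ v ∈ f.dom, f.toFun v = V v)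
    (hpos : (0 : WithBot ℕ) ≤ FMap.alpha γ f) :
    FMap.alpha γ (FMap.next V f) < FMap.alpha γ f := by
  have hbot : ⊥ < FMap.alpha γ f := lt_of_lt_of_le (by simp) hpos
  rw [FMap.alpha, FMap.next, Finset.sup_lt_iff hbot]
  intro y hy
  simp only [Finset.mem_biUnion] at hy
  obtain ⟨v, hv, hyv⟩ := hy
  rw [hf v hv] at hyv
  calc (γ y : WithBot ℕ) < γ v := by exact_mod_cast hγ v y hyv
    _ ≤ FMap.alpha γ f := Finset.le_sup (f := fun v => (γ v : WithBot ℕ)) hv
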